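/- For pairwise distinct positive reals x₁, x₂, x₃, the function L̃(p) = ((x₂/x₃)^(p-1) − (x₁/x₃)^(p-1))(x₁−x₂)(log(x₁/x₂))² + ((x₃/x₂)^(p-1) − (x₁/x₂)^(p-1))(x₁−x₃)(log(x₁/x₃))² + ((x₃/x₁)^(p-1) − (x₂/x₁)^(p-1))(x₂−x₃)(log(x₂/x₃))² + K is strictly decreasing in p, where K = (x₁−x₂)log(x₁/x₂)log(x₁x₂/x₃²) + (x₁−x₃)log(x₁/x₃)log(x₁x₃/x₂²) + (x₂−x₃)log(x₂/x₃)log(x₂x₃/x₁²). -/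

import Mathlib

open Real

private lemma expcvx (X Y u v : ℝ) (hu : 0 ≤ u) (hv : 0 ≤ v) (huv : 0 < u + v) :
    (u + v) * Real.exp ((u * X + v * Y) / (u + v)) ≤ u * Real.exp X + v * Real.exp Y := by
  have hsum : u / (u + v) + v / (u + v) = 1 := by
    rw [← add_div, div_self huv.ne']
  have h := convexOn_exp.2 (Set.mem_univ X) (Set.mem_univ Y)
      (div_nonneg hu huv.le) (div_nonneg hv huv.le) hsum
  simp only [smul_eq_mul] at h
  have harg : u / (u + v) * X + v / (u + v) * Y = (u * X + v * Y) / (u + v) := by ring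
  rw [harg] at h
  have h2 := mul_le_mul_of_nonneg_left h huv.le
  calc (u + v) * Real.exp ((u * X + v * Y) / (u + v))
      ≤ (u + v) * (u / (u + v) * Real.exp X + v / (u + v) * Real.exp Y) := h2
    _ = u * Real.exp X + v * Real.exp Y := by field_simp

set_option maxHeartbeats 1600000 in
private lemma key (a b c : ℝ) (ha : 0 < a) (hb : 0 < b) :
    0 < Real.exp b * (Real.exp a - 1) * a ^ 2 *
          ((a + b) * Real.exp (c * (a + b)) - b * Real.exp (c * b)) +
        (Real.exp a * Real.exp b - 1) * (a + b) ^ 2 *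
          (a * Real.exp (c * a) + b * Real.exp (-(c * b))) +
        (Real.exp b - 1) * b ^ 2 *
          ((a + b) * Real.exp (-(c * (a + b))) - a * Real.exp (-(c * a))) := by
  have hea : 1 < Real.exp a := by rw [← Real.exp_zero]; exact Real.exp_lt_exp.2 ha
  have heb : 1 < Real.exp b := by rw [← Real.exp_zero]; exact Real.exp_lt_exp.2 hb
  have hP1 : 0 < Real.exp b * (Real.exp a - 1) := mul_pos (Real.exp_pos b) (by linarith)
  have hP2 : 0 < Real.exp a * Real.exp b - 1 := by nlinarith
  have hP3 : 0 < Real.exp b - 1 := by linarith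
  have hP12 : Real.exp b * (Real.exp a - 1) ≤ Real.exp a * Real.exp b - 1 := by nlinarith
  have hP32 : Real.exp b - 1 ≤ Real.exp a * Real.exp b - 1 := by nlinarith
  have hab : 0 < a + b := by linarith
  rcases le_total b a with hba | hab'
  · -- case b ≤ a
    have h1 := expcvx (-(c * b)) (-(c * (a + b))) b (a - b) hb.le (by linarith) (by linarith)
    have harg1 : (b * -(c * b) + (a - b) * -(c * (a + b))) / (b + (a - b)) = -(c * a) := by
      rw [show b + (a - b) = a from by ring]
      field_simp
      ring
    rw [harg1, show b + (a - b) = a from by ring] at h1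
    have h2 := expcvx (c * a) (-(c * b)) (2 * b) (a - b) (by linarith) (by linarith) (by linarith)
    have harg2 : (2 * b * (c * a) + (a - b) * -(c * b)) / (2 * b + (a - b)) = c * b := by
      rw [show 2 * b + (a - b) = a + b from by ring]
      field_simp
      ring
    rw [harg2, show 2 * b + (a - b) = a + b from by ring] at h2
    have m1 := mul_le_mul_of_nonneg_left h2
      (show (0:ℝ) ≤ Real.exp b * (Real.exp a - 1) * a ^ 2 * b from
        mul_nonneg (mul_nonneg hP1.le (sq_nonneg a)) hb.le)
    have m2 := mul_le_mul_of_nonneg_left h1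
      (show (0:ℝ) ≤ (Real.exp b - 1) * b ^ 2 * (a + b) from
        mul_nonneg (mul_nonneg hP3.le (sq_nonneg b)) hab.le)
    have c1 : 2 * (Real.exp b * (Real.exp a - 1)) * a ^ 2 * b ^ 2 ≤
        (Real.exp a * Real.exp b - 1) * (a + b) ^ 3 * a := by
      have hpoly : 2 * (a ^ 2 * b ^ 2) ≤ (a + b) ^ 3 * a := by
        nlinarith [mul_pos (mul_pos ha ha) (mul_pos ha hb),
          mul_pos (mul_pos ha ha) (mul_pos hb hb),
          mul_pos (mul_pos ha hb) (mul_pos hb hb),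
          mul_pos (mul_pos ha ha) (mul_pos ha ha)]
      have hm := mul_le_mul hP12 hpoly (by positivity) hP2.le
      nlinarith [hm]
    have c2 : Real.exp b * (Real.exp a - 1) * a ^ 2 * b * (a - b) +
        (Real.exp b - 1) * b ^ 3 * (a + b) ≤
        (Real.exp a * Real.exp b - 1) * (a + b) ^ 3 * b := by
      have h' : a ^ 2 * b * (a - b) ≤ a ^ 2 * b * (a + b) := by
        nlinarith [mul_nonneg (mul_nonneg (sq_nonneg a) hb.le) hb.le]
      have s1 := mul_le_mul hP12 h'
        (mul_nonneg (mul_nonneg (sq_nonneg a) hb.le) (by linarith)) hP2.le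
      have s2 := mul_le_mul_of_nonneg_right hP32
        (show (0:ℝ) ≤ b ^ 2 * (b * (a + b)) from by positivity)
      nlinarith [s1, s2, mul_pos hP2 (mul_pos (mul_pos hb hab) (mul_pos ha hb))]
    have t1 : 0 ≤ ((Real.exp a * Real.exp b - 1) * (a + b) ^ 3 * a -
        2 * (Real.exp b * (Real.exp a - 1)) * a ^ 2 * b ^ 2) * Real.exp (c * a) :=
      mul_nonneg (by linarith) (Real.exp_pos _).le
    have t2 : 0 ≤ ((Real.exp a * Real.exp b - 1) * (a + b) ^ 3 * b -
        Real.exp b * (Real.exp a - 1) * a ^ 2 * b * (a - b) -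
        (Real.exp b - 1) * b ^ 3 * (a + b)) * Real.exp (-(c * b)) :=
      mul_nonneg (by linarith) (Real.exp_pos _).le
    have t3 : 0 ≤ ((Real.exp b - 1) * b ^ 2 * (a + b) * (2 * b)) *
        Real.exp (-(c * (a + b))) :=
      mul_nonneg (mul_nonneg (mul_nonneg (mul_nonneg hP3.le (sq_nonneg b)) hab.le)
        (by linarith)) (Real.exp_pos _).le
    have t4 : 0 < (Real.exp b * (Real.exp a - 1) * a ^ 2 * (a + b) ^ 2) *
        Real.exp (c * (a + b)) :=
      mul_pos (mul_pos (mul_pos hP1 (pow_pos ha 2)) (pow_pos hab 2)) (Real.exp_pos _)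
    have hS : 0 < (a + b) * (Real.exp b * (Real.exp a - 1) * a ^ 2 *
          ((a + b) * Real.exp (c * (a + b)) - b * Real.exp (c * b)) +
        (Real.exp a * Real.exp b - 1) * (a + b) ^ 2 *
          (a * Real.exp (c * a) + b * Real.exp (-(c * b))) +
        (Real.exp b - 1) * b ^ 2 *
          ((a + b) * Real.exp (-(c * (a + b))) - a * Real.exp (-(c * a)))) := by
      linarith [m1, m2, t1, t2, t3, t4]
    nlinarith [hS, hab]
  · -- case a ≤ b
    have h1 := expcvx (c * a) (c * (a + b)) a (b - a) ha.le (by linarith) (by linarith)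
    have harg1 : (a * (c * a) + (b - a) * (c * (a + b))) / (a + (b - a)) = c * b := by
      rw [show a + (b - a) = b from by ring]
      field_simp
      ring
    rw [harg1, show a + (b - a) = b from by ring] at h1
    have h2 := expcvx (c * a) (-(c * b)) (b - a) (2 * a) (by linarith) (by linarith) (by linarith)
    have harg2 : ((b - a) * (c * a) + 2 * a * -(c * b)) / (b - a + 2 * a) = -(c * a) := by
      rw [show b - a + 2 * a = a + b from by ring]
      field_simp
      ring
    rw [harg2, show b - a + 2 * a = a + b from by ring] at h2
    have m1 := mul_le_mul_of_nonneg_left h1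
      (show (0:ℝ) ≤ Real.exp b * (Real.exp a - 1) * a ^ 2 * (a + b) from
        mul_nonneg (mul_nonneg hP1.le (sq_nonneg a)) hab.le)
    have m2 := mul_le_mul_of_nonneg_left h2
      (show (0:ℝ) ≤ (Real.exp b - 1) * b ^ 2 * a from
        mul_nonneg (mul_nonneg hP3.le (sq_nonneg b)) ha.le)
    have c1 : Real.exp b * (Real.exp a - 1) * a ^ 2 * (a + b) * a +
        (Real.exp b - 1) * b ^ 2 * a * (b - a) ≤
        (Real.exp a * Real.exp b - 1) * (a + b) ^ 3 * a := by
      have s1 := mul_le_mul_of_nonneg_right hP12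
        (show (0:ℝ) ≤ a ^ 2 * ((a + b) * a) from by positivity)
      have h'' : b ^ 2 * a * (b - a) ≤ b ^ 2 * a * (a + b) := by
        nlinarith [mul_nonneg (mul_nonneg (sq_nonneg b) ha.le) ha.le]
      have s2 := mul_le_mul hP32 h''
        (mul_nonneg (mul_nonneg (sq_nonneg b) ha.le) (by linarith)) hP2.le
      nlinarith [s1, s2, mul_pos hP2 (mul_pos (mul_pos ha hab) (mul_pos ha hb))]
    have c2 : 2 * (Real.exp b - 1) * a ^ 2 * b ^ 2 ≤
        (Real.exp a * Real.exp b - 1) * (a + b) ^ 3 * b := by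
      have hpoly : 2 * (a ^ 2 * b ^ 2) ≤ (a + b) ^ 3 * b := by
        nlinarith [mul_pos (mul_pos hb hb) (mul_pos ha hb),
          mul_pos (mul_pos hb hb) (mul_pos ha ha),
          mul_pos (mul_pos ha hb) (mul_pos ha ha),
          mul_pos (mul_pos hb hb) (mul_pos hb hb)]
      have hm := mul_le_mul hP32 hpoly (by positivity) hP2.le
      nlinarith [hm]
    have t1 : 0 ≤ ((Real.exp a * Real.exp b - 1) * (a + b) ^ 3 * a -
        Real.exp b * (Real.exp a - 1) * a ^ 2 * (a + b) * a -
        (Real.exp b - 1) * b ^ 2 * a * (b - a)) * Real.exp (c * a) :=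
      mul_nonneg (by linarith) (Real.exp_pos _).le
    have t2 : 0 ≤ ((Real.exp a * Real.exp b - 1) * (a + b) ^ 3 * b -
        2 * (Real.exp b - 1) * a ^ 2 * b ^ 2) * Real.exp (-(c * b)) :=
      mul_nonneg (by linarith) (Real.exp_pos _).le
    have t3 : 0 ≤ (Real.exp b * (Real.exp a - 1) * a ^ 2 * (a + b) * (2 * a)) *
        Real.exp (c * (a + b)) :=
      mul_nonneg (mul_nonneg (mul_nonneg (mul_nonneg hP1.le (sq_nonneg a)) hab.le)
        (by linarith)) (Real.exp_pos _).le
    have t4 : 0 < ((Real.exp b - 1) * b ^ 2 * (a + b) ^ 2) * Real.exp (-(c * (a + b))) :=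
      mul_pos (mul_pos (mul_pos hP3 (pow_pos hb 2)) (pow_pos hab 2)) (Real.exp_pos _)
    have hS : 0 < (a + b) * (Real.exp b * (Real.exp a - 1) * a ^ 2 *
          ((a + b) * Real.exp (c * (a + b)) - b * Real.exp (c * b)) +
        (Real.exp a * Real.exp b - 1) * (a + b) ^ 2 *
          (a * Real.exp (c * a) + b * Real.exp (-(c * b))) +
        (Real.exp b - 1) * b ^ 2 *
          ((a + b) * Real.exp (-(c * (a + b))) - a * Real.exp (-(c * a)))) := by
      linarith [m1, m2, t1, t2, t3, t4]
    nlinarith [hS, hab]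

private lemma key2 (L1 L2 L3 c : ℝ) (h32 : L3 < L2) (h21 : L2 < L1) :
    (Real.exp ((L2 - L3) * c) * (L2 - L3) - Real.exp ((L1 - L3) * c) * (L1 - L3)) *
        (Real.exp L1 - Real.exp L2) * (L1 - L2) ^ 2 +
      (Real.exp ((L3 - L2) * c) * (L3 - L2) - Real.exp ((L1 - L2) * c) * (L1 - L2)) *
        (Real.exp L1 - Real.exp L3) * (L1 - L3) ^ 2 +
      (Real.exp ((L3 - L1) * c) * (L3 - L1) - Real.exp ((L2 - L1) * c) * (L2 - L1)) *
        (Real.exp L2 - Real.exp L3) * (L2 - L3) ^ 2 < 0 := by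
  obtain ⟨a, rfl⟩ : ∃ a, L1 = L2 + a := ⟨L1 - L2, by ring⟩
  obtain ⟨b, rfl⟩ : ∃ b, L2 = L3 + b := ⟨L2 - L3, by ring⟩
  have ha : 0 < a := by linarith
  have hb : 0 < b := by linarith
  rw [show (L3 + b - L3) * c = c * b from by ring,
      show (L3 + b + a - L3) * c = c * (a + b) from by ring,
      show (L3 - (L3 + b)) * c = -(c * b) from by ring,
      show (L3 + b + a - (L3 + b)) * c = c * a from by ring,
      show (L3 - (L3 + b + a)) * c = -(c * (a + b)) from by ring,
      show (L3 + b - (L3 + b + a)) * c = -(c * a) from by ring]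
  simp only [Real.exp_add]
  have hk := key a b c ha hb
  nlinarith [mul_pos (Real.exp_pos L3) hk]

private lemma Dlem (x₁ x₂ x₃ c : ℝ) (h3 : 0 < x₃) (h32 : x₃ < x₂) (h21 : x₂ < x₁) :
    ((x₂ / x₃) ^ c * (Real.log x₂ - Real.log x₃) -
        (x₁ / x₃) ^ c * (Real.log x₁ - Real.log x₃)) * (x₁ - x₂) *
        (Real.log x₁ - Real.log x₂) ^ 2 +
      ((x₃ / x₂) ^ c * (Real.log x₃ - Real.log x₂) -
        (x₁ / x₂) ^ c * (Real.log x₁ - Real.log x₂)) * (x₁ - x₃) *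
        (Real.log x₁ - Real.log x₃) ^ 2 +
      ((x₃ / x₁) ^ c * (Real.log x₃ - Real.log x₁) -
        (x₂ / x₁) ^ c * (Real.log x₂ - Real.log x₁)) * (x₂ - x₃) *
        (Real.log x₂ - Real.log x₃) ^ 2 < 0 := by
  have h2 : 0 < x₂ := h3.trans h32
  have h1 : 0 < x₁ := h2.trans h21
  have k := key2 (Real.log x₁) (Real.log x₂) (Real.log x₃) c
    (Real.log_lt_log h3 h32) (Real.log_lt_log h2 h21)
  rw [Real.exp_log h1, Real.exp_log h2, Real.exp_log h3] at k
  rw [Real.rpow_def_of_pos (div_pos h2 h3), Real.rpow_def_of_pos (div_pos h1 h3),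
      Real.rpow_def_of_pos (div_pos h3 h2), Real.rpow_def_of_pos (div_pos h1 h2),
      Real.rpow_def_of_pos (div_pos h3 h1), Real.rpow_def_of_pos (div_pos h2 h1),
      Real.log_div h2.ne' h3.ne', Real.log_div h1.ne' h3.ne', Real.log_div h3.ne' h2.ne',
      Real.log_div h1.ne' h2.ne', Real.log_div h3.ne' h1.ne', Real.log_div h2.ne' h1.ne']
  exact k

theorem lehmer_tilde_strictAnti (x₁ x₂ x₃ : ℝ)
    (hx₁ : 0 < x₁) (hx₂ : 0 < x₂) (hx₃ : 0 < x₃)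
    (h12 : x₁ ≠ x₂) (h13 : x₁ ≠ x₃) (h23 : x₂ ≠ x₃) :
    StrictAnti (fun p : ℝ =>
      ((x₂ / x₃) ^ (p - 1) - (x₁ / x₃) ^ (p - 1)) * (x₁ - x₂) *
          (Real.log (x₁ / x₂)) ^ 2 +
        ((x₃ / x₂) ^ (p - 1) - (x₁ / x₂) ^ (p - 1)) * (x₁ - x₃) *
          (Real.log (x₁ / x₃)) ^ 2 +
        ((x₃ / x₁) ^ (p - 1) - (x₂ / x₁) ^ (p - 1)) * (x₂ - x₃) *
          (Real.log (x₂ / x₃)) ^ 2 +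
        ((x₁ - x₂) * Real.log (x₁ / x₂) * Real.log (x₁ * x₂ / (x₃ * x₃)) +
          (x₁ - x₃) * Real.log (x₁ / x₃) * Real.log (x₁ * x₃ / (x₂ * x₂)) +
          (x₂ - x₃) * Real.log (x₂ / x₃) * Real.log (x₂ * x₃ / (x₁ * x₁)))) := by
  apply strictAnti_of_deriv_neg
  intro p
  have Hd : ∀ u : ℝ, 0 < u → HasDerivAt (fun q : ℝ => u ^ (q - 1))
      (u ^ (p - 1) * Real.log u) p := by
    intro u hu
    have h0 := (Real.hasStrictDerivAt_const_rpow hu (p - 1)).hasDerivAt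
    have h1 : HasDerivAt (fun q : ℝ => q - 1) 1 p := (hasDerivAt_id p).sub_const 1
    have h2 := HasDerivAt.comp p h0 h1
    simpa [Function.comp_def] using h2
  have d23 := Hd (x₂ / x₃) (div_pos hx₂ hx₃)
  have d13 := Hd (x₁ / x₃) (div_pos hx₁ hx₃)
  have d32 := Hd (x₃ / x₂) (div_pos hx₃ hx₂)
  have d12 := Hd (x₁ / x₂) (div_pos hx₁ hx₂)
  have d31 := Hd (x₃ / x₁) (div_pos hx₃ hx₁)
  have d21 := Hd (x₂ / x₁) (div_pos hx₂ hx₁)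
  have hD : HasDerivAt (fun p : ℝ =>
      ((x₂ / x₃) ^ (p - 1) - (x₁ / x₃) ^ (p - 1)) * (x₁ - x₂) *
          (Real.log (x₁ / x₂)) ^ 2 +
        ((x₃ / x₂) ^ (p - 1) - (x₁ / x₂) ^ (p - 1)) * (x₁ - x₃) *
          (Real.log (x₁ / x₃)) ^ 2 +
        ((x₃ / x₁) ^ (p - 1) - (x₂ / x₁) ^ (p - 1)) * (x₂ - x₃) *
          (Real.log (x₂ / x₃)) ^ 2 +
        ((x₁ - x₂) * Real.log (x₁ / x₂) * Real.log (x₁ * x₂ / (x₃ * x₃)) +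
          (x₁ - x₃) * Real.log (x₁ / x₃) * Real.log (x₁ * x₃ / (x₂ * x₂)) +
          (x₂ - x₃) * Real.log (x₂ / x₃) * Real.log (x₂ * x₃ / (x₁ * x₁))))
      (((x₂ / x₃) ^ (p - 1) * Real.log (x₂ / x₃) -
          (x₁ / x₃) ^ (p - 1) * Real.log (x₁ / x₃)) * (x₁ - x₂) *
          (Real.log (x₁ / x₂)) ^ 2 +
        ((x₃ / x₂) ^ (p - 1) * Real.log (x₃ / x₂) -
          (x₁ / x₂) ^ (p - 1) * Real.log (x₁ / x₂)) * (x₁ - x₃) *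
          (Real.log (x₁ / x₃)) ^ 2 +
        ((x₃ / x₁) ^ (p - 1) * Real.log (x₃ / x₁) -
          (x₂ / x₁) ^ (p - 1) * Real.log (x₂ / x₁)) * (x₂ - x₃) *
          (Real.log (x₂ / x₃)) ^ 2) p := by
    exact (((((d23.sub d13).mul_const (x₁ - x₂)).mul_const ((Real.log (x₁ / x₂)) ^ 2)).add
      ((((d32.sub d12).mul_const (x₁ - x₃)).mul_const ((Real.log (x₁ / x₃)) ^ 2)))).add
        ((((d31.sub d21).mul_const (x₂ - x₃)).mul_const ((Real.log (x₂ / x₃)) ^ 2)))).add_const _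
  rw [hD.deriv]
  rw [Real.log_div hx₂.ne' hx₃.ne', Real.log_div hx₁.ne' hx₃.ne',
      Real.log_div hx₃.ne' hx₂.ne', Real.log_div hx₁.ne' hx₂.ne',
      Real.log_div hx₃.ne' hx₁.ne', Real.log_div hx₂.ne' hx₁.ne']
  obtain a12 | a12 := h12.lt_or_gt <;> obtain a13 | a13 := h13.lt_or_gt <;>
    obtain a23 | a23 := h23.lt_or_gt
  · linarith [Dlem x₃ x₂ x₁ (p - 1) hx₁ a12 a23]
  · linarith [Dlem x₂ x₃ x₁ (p - 1) hx₁ a13 a23]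
  · linarith
  · linarith [Dlem x₂ x₁ x₃ (p - 1) hx₃ a13 a12]
  · linarith [Dlem x₃ x₁ x₂ (p - 1) hx₂ a12 a13]
  · linarith
  · linarith [Dlem x₁ x₃ x₂ (p - 1) hx₂ a23 a13]
  · linarith [Dlem x₁ x₂ x₃ (p - 1) hx₃ a23 a12]
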